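/- arXiv:2503.16700 — 5 statements merged into one kernel-verified Lean document; each statement's English description precedes it below -/
import Mathlib

section
/- The AGT2 ODE vector field f is quasi-monotone increasing on ℝ^{S×A} × ℝ^{S×A} (viewed as ℝ^{2|S||A|}). -/
open Finset

/-- Maximum of `Q s' a'` over actions `a'`. -/
noncomputable def maxQ {S A : Type*} [Fintype A] [Nonempty A]
    (Q : S → A → ℝ) (s' : S) : ℝ :=
  univ.sup' univ_nonempty (fun a' => Q s' a')

/-- The Bellman optimality operator. -/
noncomputable def bellmanT {S A : Type*} [Fintype S] [Fintype A] [Nonempty A]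
    (P r : S → A → S → ℝ) (γ : ℝ) (Q : S → A → ℝ) : S → A → ℝ :=
  fun s a => ∑ s', P s a s' * (r s a s' + γ * maxQ Q s')

/-- A map `F : ℝ^ι → ℝ^ι` is quasi-monotone increasing if for every index `i` and all
`x, y` with `x i = y i` and `x j ≤ y j` for all `j ≠ i`, one has `F x i ≤ F y i`. -/
def QuasiMonotone {ι : Type*} (F : (ι → ℝ) → ι → ℝ) : Prop :=
  ∀ (i : ι) (x y : ι → ℝ), x i = y i → (∀ j, j ≠ i → x j ≤ y j) → F x i ≤ F y i

/-- The AGT2 ODE vector field on `ℝ^{S×A} × ℝ^{S×A}`, indexed by `(S × A) ⊕ (S × A)`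
(the first summand carries `x₁`, the second carries `x₂`). -/
noncomputable def agt2Field {S A : Type*} [Fintype S] [Fintype A] [Nonempty A]
    (P : S → A → S → ℝ) (γ β : ℝ) (d : S → A → ℝ) (Qstar : S → A → ℝ)
    (x : (S × A) ⊕ (S × A) → ℝ) : (S × A) ⊕ (S × A) → ℝ :=
  Sum.elim
    (fun p => -(d p.1 p.2) * x (Sum.inl p) +
      γ * d p.1 p.2 * ∑ s', P p.1 p.2 s' *
        ((univ.sup' univ_nonempty fun a' => x (Sum.inr (s', a')) + Qstar s' a') -
          univ.sup' univ_nonempty fun a' => Qstar s' a'))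
    (fun p => β * d p.1 p.2 * (x (Sum.inl p) - x (Sum.inr p)))

/-- The AGT2 upper comparison field. -/
noncomputable def agt2Upper {S A : Type*} [Fintype S] [Fintype A] [Nonempty A]
    (P : S → A → S → ℝ) (γ β : ℝ) (d : S → A → ℝ)
    (x : (S × A) ⊕ (S × A) → ℝ) : (S × A) ⊕ (S × A) → ℝ :=
  Sum.elim
    (fun p => -(d p.1 p.2) * x (Sum.inl p) +
      γ * d p.1 p.2 * ∑ s', P p.1 p.2 s' *
        (univ.sup' univ_nonempty fun a' => x (Sum.inr (s', a'))))
    (fun p => β * d p.1 p.2 * (x (Sum.inl p) - x (Sum.inr p)))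

/-- The AGT2 lower comparison field (a linear map), defined relative to a greedy
policy `πstar` for `Q*`. -/
noncomputable def agt2Lower {S A : Type*} [Fintype S]
    (P : S → A → S → ℝ) (γ β : ℝ) (d : S → A → ℝ) (πstar : S → A)
    (x : (S × A) ⊕ (S × A) → ℝ) : (S × A) ⊕ (S × A) → ℝ :=
  Sum.elim
    (fun p => -(d p.1 p.2) * x (Sum.inl p) +
      γ * d p.1 p.2 * ∑ s', P p.1 p.2 s' * x (Sum.inr (s', πstar s')))
    (fun p => β * d p.1 p.2 * (x (Sum.inl p) - x (Sum.inr p)))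

theorem agt2Field_quasiMonotone
    {S A : Type*} [Fintype S] [Fintype A] [Nonempty S] [Nonempty A]
    (P r : S → A → S → ℝ) (γ : ℝ) (hγ0 : 0 ≤ γ) (hγ1 : γ < 1)
    (hP0 : ∀ s a s', 0 ≤ P s a s') (hP1 : ∀ s a, ∑ s', P s a s' = 1)
    (Qstar : S → A → ℝ) (hQstar : bellmanT P r γ Qstar = Qstar)
    (β : ℝ) (hβ : 0 < β)
    (d : S → A → ℝ) (hd : ∀ s a, 0 < d s a) :
    QuasiMonotone (agt2Field P γ β d Qstar) := by
  intro i x y hxy hle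
  cases i with
  | inl p =>
    simp only [agt2Field, Sum.elim_inl]
    rw [hxy]
    apply add_le_add_right
    apply mul_le_mul_of_nonneg_left _ (mul_nonneg hγ0 (hd p.1 p.2).le)
    apply Finset.sum_le_sum
    intro s' _
    apply mul_le_mul_of_nonneg_left _ (hP0 _ _ _)
    apply sub_le_sub_right
    apply Finset.sup'_mono_fun
    intro a' _
    have : (Sum.inr (s', a') : (S × A) ⊕ (S × A)) ≠ Sum.inl p := by simp
    exact add_le_add_left (hle _ this) _
  | inr p =>
    simp only [agt2Field, Sum.elim_inr]
    rw [hxy]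
    gcongr
    · exact mul_nonneg hβ.le (hd p.1 p.2).le
    · exact hle _ (by simp)
end

section
/- Let x : [0,∞) → ℝ^{S×A} × ℝ^{S×A} be a differentiable curve with x'(t) = f(x(t)) for all t ≥ 0, and let x^u : [0,∞) → ℝ^{S×A} × ℝ^{S×A} be a differentiable curve with (x^u)'(t) = h(x^u(t)) for all t ≥ 0 and x^u(0) > x(0) componentwise (strict in every coordinate). Then x^u(t) ≥ x(t) componentwise for all t ≥ 0. -/
open Finset

private lemma hasDerivAt_minsq (u : ℝ) :
    HasDerivAt (fun v : ℝ => (min v 0) ^ 2) (2 * min u 0) u := by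
  rcases lt_trichotomy u 0 with h | h | h
  · have hev : (fun v : ℝ => (min v 0) ^ 2) =ᶠ[nhds u] fun v : ℝ => v ^ 2 := by
      filter_upwards [isOpen_Iio.eventually_mem (show u ∈ Set.Iio (0:ℝ) from h)] with v hv
      rw [min_eq_left (le_of_lt hv)]
    have h2 : HasDerivAt (fun v : ℝ => v ^ 2) (2 * u) u := by
      simpa [mul_comm] using hasDerivAt_pow 2 u
    rw [min_eq_left h.le]
    exact h2.congr_of_eventuallyEq hev
  · subst h
    rw [hasDerivAt_iff_isLittleO]
    simp only [min_self, mul_zero, smul_zero, sub_zero, zero_pow, ne_eq, OfNat.ofNat_ne_zero,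
      not_false_eq_true]
    rw [Asymptotics.isLittleO_iff]
    intro c hc
    have : ∀ᶠ v : ℝ in nhds 0, |v - 0| < c := by
      have := Metric.ball_mem_nhds (0:ℝ) hc
      filter_upwards [this] with v hv
      simpa [Real.dist_eq] using hv
    filter_upwards [this] with v hv
    have h1 : |min v 0| ≤ |v| := by
      rcases le_total v 0 with h | h
      · rw [min_eq_left h]
      · rw [min_eq_right h]; simp [abs_nonneg]
    have : ‖(min v 0) ^ 2‖ ≤ |v| * |v| := by
      rw [Real.norm_eq_abs, abs_pow, sq]
      exact mul_le_mul h1 h1 (abs_nonneg _) (abs_nonneg _)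
    calc ‖(min v 0) ^ 2‖ ≤ |v| * |v| := this
      _ ≤ c * |v| := by
          apply mul_le_mul_of_nonneg_right _ (abs_nonneg _)
          simpa using hv.le
      _ = c * ‖v‖ := by rw [Real.norm_eq_abs]
  · have hev : (fun v : ℝ => (min v 0) ^ 2) =ᶠ[nhds u] fun _ : ℝ => (0:ℝ) := by
      filter_upwards [isOpen_Ioi.eventually_mem (show u ∈ Set.Ioi (0:ℝ) from h)] with v hv
      rw [min_eq_right (le_of_lt hv)]; ring
    rw [min_eq_right h.le, mul_zero]
    exact (hasDerivAt_const u (0:ℝ)).congr_of_eventuallyEq hev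

private lemma key_bound {S A : Type*} [Fintype S] [Fintype A] [Nonempty S] [Nonempty A]
    (P : S → A → S → ℝ) (γ β : ℝ) (hγ0 : 0 ≤ γ) (hβ : 0 < β)
    (hP0 : ∀ s a s', 0 ≤ P s a s') (hP1 : ∀ s a, ∑ s', P s a s' = 1)
    (d : S → A → ℝ) (hd : ∀ s a, 0 < d s a) (Qstar : S → A → ℝ)
    (u v : (S × A) ⊕ (S × A) → ℝ) (i : (S × A) ⊕ (S × A)) :
    min (u i - v i) 0 * (agt2Upper P γ β d u i - agt2Field P γ β d Qstar v i)
      ≤ (Sum.elim (fun p => γ * d p.1 p.2) (fun p => β * d p.1 p.2) i) *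
        ∑ j, (min (u j - v j) 0) ^ 2 := by
  classical
  set n : (S × A) ⊕ (S × A) → ℝ := fun j => min (u j - v j) 0 with hn
  set φ : ℝ := ∑ j, (n j) ^ 2 with hφ
  set M : ℝ := univ.sup' univ_nonempty (fun j => -(n j)) with hM
  have hn0 : ∀ j, n j ≤ 0 := fun j => min_le_right _ _
  have hny : ∀ j, 0 ≤ n j * (u j - v j) := by
    intro j
    rcases le_total (u j - v j) 0 with h | h
    · rw [hn]; simp only; rw [min_eq_left h]; nlinarith
    · rw [hn]; simp only; rw [min_eq_right h]; simp
  have hnφ : ∀ j, (n j) ^ 2 ≤ φ :=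
    fun j => Finset.single_le_sum (fun k _ => sq_nonneg (n k)) (mem_univ j)
  have hMn : ∀ j, -(n j) ≤ M := fun j => by rw [hM]; exact le_sup' (fun k => -(n k)) (mem_univ j)
  have hM0 : 0 ≤ M := le_trans (by linarith [hn0 (Classical.arbitrary _)]) (hMn (Classical.arbitrary _))
  have hMφ : M ^ 2 ≤ φ := by
    obtain ⟨j, -, hj⟩ := Finset.exists_mem_eq_sup' univ_nonempty (fun j => -(n j))
    rw [hM, hj]
    calc (-(n j)) ^ 2 = (n j) ^ 2 := by ring
      _ ≤ φ := hnφ j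
  have hyM : ∀ j, -M ≤ u j - v j := by
    intro j
    have h1 : n j ≤ u j - v j := min_le_left _ _
    have := hMn j
    linarith
  have hφ0 : 0 ≤ φ := Finset.sum_nonneg fun k _ => sq_nonneg _
  have hprod : ∀ j, M * (-(n j)) ≤ φ := by
    intro j
    nlinarith [sq_nonneg (M + n j), hMφ, hnφ j]
  rcases i with p | p
  · -- inl case
    simp only [agt2Upper, agt2Field, Sum.elim_inl]
    have hdp := hd p.1 p.2
    set B : S → ℝ := fun s' =>
      (univ.sup' univ_nonempty fun a' => u (Sum.inr (s', a'))) -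
        ((univ.sup' univ_nonempty fun a' => v (Sum.inr (s', a')) + Qstar s' a') -
          univ.sup' univ_nonempty fun a' => Qstar s' a') with hB
    have hBlow : ∀ s', -M ≤ B s' := by
      intro s'
      obtain ⟨a₀, -, ha₀⟩ := Finset.exists_mem_eq_sup' (univ_nonempty (α := A))
        (fun a' => v (Sum.inr (s', a')))
      have h1 : (univ.sup' univ_nonempty fun a' => v (Sum.inr (s', a'))) - M ≤
          univ.sup' univ_nonempty fun a' => u (Sum.inr (s', a')) := by
        rw [ha₀]
        calc v (Sum.inr (s', a₀)) - M ≤ u (Sum.inr (s', a₀)) := by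
              have := hyM (Sum.inr (s', a₀)); linarith
          _ ≤ _ := le_sup' (fun a' => u (Sum.inr (s', a'))) (mem_univ a₀)
      have h2 : (univ.sup' univ_nonempty fun a' => v (Sum.inr (s', a')) + Qstar s' a') ≤
          (univ.sup' univ_nonempty fun a' => v (Sum.inr (s', a'))) +
            univ.sup' univ_nonempty fun a' => Qstar s' a' := by
        apply Finset.sup'_le
        intro a _
        exact add_le_add (le_sup' (fun a' => v (Sum.inr (s', a'))) (mem_univ a))
          (le_sup' (fun a' => Qstar s' a') (mem_univ a))
      rw [hB]
      simp only
      linarith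
    have hsum : -M ≤ ∑ s', P p.1 p.2 s' * B s' := by
      calc -M = ∑ s', P p.1 p.2 s' * (-M) := by
            rw [← Finset.sum_mul, hP1]; ring
        _ ≤ ∑ s', P p.1 p.2 s' * B s' :=
            Finset.sum_le_sum fun s' _ =>
              mul_le_mul_of_nonneg_left (hBlow s') (hP0 _ _ _)
    have hexpand :
        (-(d p.1 p.2) * u (Sum.inl p) +
          γ * d p.1 p.2 * ∑ s', P p.1 p.2 s' *
            (univ.sup' univ_nonempty fun a' => u (Sum.inr (s', a')))) -
        (-(d p.1 p.2) * v (Sum.inl p) +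
          γ * d p.1 p.2 * ∑ s', P p.1 p.2 s' *
            ((univ.sup' univ_nonempty fun a' => v (Sum.inr (s', a')) + Qstar s' a') -
              univ.sup' univ_nonempty fun a' => Qstar s' a'))
        = -(d p.1 p.2) * (u (Sum.inl p) - v (Sum.inl p)) +
          γ * d p.1 p.2 * ∑ s', P p.1 p.2 s' * B s' := by
      have : ∑ s', P p.1 p.2 s' * B s' =
          (∑ s', P p.1 p.2 s' * (univ.sup' univ_nonempty fun a' => u (Sum.inr (s', a')))) -
          ∑ s', P p.1 p.2 s' *
            ((univ.sup' univ_nonempty fun a' => v (Sum.inr (s', a')) + Qstar s' a') -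
              univ.sup' univ_nonempty fun a' => Qstar s' a') := by
        rw [← Finset.sum_sub_distrib]
        exact Finset.sum_congr rfl fun s' _ => by rw [hB]; ring
      rw [this]; ring
    rw [hexpand]
    have hip : n (Sum.inl p) ≤ 0 := hn0 _
    have h3 : n (Sum.inl p) * (γ * d p.1 p.2 * ∑ s', P p.1 p.2 s' * B s')
        ≤ γ * d p.1 p.2 * φ := by
      have h4 : n (Sum.inl p) * (∑ s', P p.1 p.2 s' * B s') ≤ n (Sum.inl p) * (-M) :=
        mul_le_mul_of_nonpos_left hsum hip
      have h5 : n (Sum.inl p) * (-M) = M * (-(n (Sum.inl p))) := by ring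
      have h6 := hprod (Sum.inl p)
      calc n (Sum.inl p) * (γ * d p.1 p.2 * ∑ s', P p.1 p.2 s' * B s')
          = γ * d p.1 p.2 * (n (Sum.inl p) * ∑ s', P p.1 p.2 s' * B s') := by ring
        _ ≤ γ * d p.1 p.2 * φ := by
            apply mul_le_mul_of_nonneg_left _ (by positivity)
            linarith
    have h7 : n (Sum.inl p) * (-(d p.1 p.2) * (u (Sum.inl p) - v (Sum.inl p))) ≤ 0 := by
      have := hny (Sum.inl p)
      nlinarith
    nlinarith [h3, h7]
  · -- inr case
    simp only [agt2Upper, agt2Field, Sum.elim_inr]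
    have hdp := hd p.1 p.2
    have h1 : n (Sum.inr p) * (u (Sum.inl p) - v (Sum.inl p)) ≤ M * (-(n (Sum.inr p))) := by
      have := mul_le_mul_of_nonpos_left (hyM (Sum.inl p)) (hn0 (Sum.inr p))
      linarith
    have h2 := hny (Sum.inr p)
    have h3 := hprod (Sum.inr p)
    have hexpand : β * d p.1 p.2 * (u (Sum.inl p) - u (Sum.inr p)) -
        β * d p.1 p.2 * (v (Sum.inl p) - v (Sum.inr p))
        = β * d p.1 p.2 * ((u (Sum.inl p) - v (Sum.inl p)) - (u (Sum.inr p) - v (Sum.inr p))) := by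
      ring
    rw [hexpand]
    calc n (Sum.inr p) * (β * d p.1 p.2 *
          ((u (Sum.inl p) - v (Sum.inl p)) - (u (Sum.inr p) - v (Sum.inr p))))
        = β * d p.1 p.2 * (n (Sum.inr p) * (u (Sum.inl p) - v (Sum.inl p))
            - n (Sum.inr p) * (u (Sum.inr p) - v (Sum.inr p))) := by ring
      _ ≤ β * d p.1 p.2 * φ := by
          apply mul_le_mul_of_nonneg_left _ (by positivity)
          linarith

theorem agt2_upper_comparison_solutions
    {S A : Type*} [Fintype S] [Fintype A] [Nonempty S] [Nonempty A]
    (P r : S → A → S → ℝ) (γ : ℝ) (hγ0 : 0 ≤ γ) (hγ1 : γ < 1)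
    (hP0 : ∀ s a s', 0 ≤ P s a s') (hP1 : ∀ s a, ∑ s', P s a s' = 1)
    (Qstar : S → A → ℝ) (hQstar : bellmanT P r γ Qstar = Qstar)
    (β : ℝ) (hβ : 0 < β)
    (d : S → A → ℝ) (hd : ∀ s a, 0 < d s a)
    (x xu : ℝ → (S × A) ⊕ (S × A) → ℝ)
    (hx : ∀ t : ℝ, 0 ≤ t → HasDerivAt x (agt2Field P γ β d Qstar (x t)) t)
    (hxu : ∀ t : ℝ, 0 ≤ t → HasDerivAt xu (agt2Upper P γ β d (xu t)) t)
    (h0 : ∀ i, x 0 i < xu 0 i) :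
    ∀ t : ℝ, 0 ≤ t → ∀ i, x t i ≤ xu t i := by
  classical
  set c : (S × A) ⊕ (S × A) → ℝ :=
    Sum.elim (fun p => γ * d p.1 p.2) (fun p => β * d p.1 p.2) with hc
  have hc0 : ∀ i, 0 ≤ c i := by
    rintro (p | p)
    · simp only [hc, Sum.elim_inl]; have := hd p.1 p.2; positivity
    · simp only [hc, Sum.elim_inr]; have := hd p.1 p.2; positivity
  set K : ℝ := 2 * ∑ i, c i with hK
  have hK0 : 0 ≤ K := by
    rw [hK]
    have : 0 ≤ ∑ i, c i := Finset.sum_nonneg fun i _ => hc0 i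
    linarith
  set φ : ℝ → ℝ := fun t => ∑ i, (min (xu t i - x t i) 0) ^ 2 with hφ
  have hφ0 : ∀ t, 0 ≤ φ t := fun t => Finset.sum_nonneg fun i _ => sq_nonneg _
  have hφzero : φ 0 = 0 := by
    rw [hφ]
    apply Finset.sum_eq_zero
    intro i _
    have := h0 i
    rw [min_eq_right (by linarith)]
    ring
  set D : ℝ → (S × A) ⊕ (S × A) → ℝ :=
    fun t i => agt2Upper P γ β d (xu t) i - agt2Field P γ β d Qstar (x t) i with hD
  have hφderiv : ∀ t : ℝ, 0 ≤ t →
      HasDerivAt φ (∑ i, 2 * min (xu t i - x t i) 0 * D t i) t := by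
    intro t ht
    apply HasDerivAt.fun_sum
    intro i _
    have hxi := hasDerivAt_pi.mp (hx t ht) i
    have hxui := hasDerivAt_pi.mp (hxu t ht) i
    have hyi : HasDerivAt (fun τ => xu τ i - x τ i) (D t i) t := hxui.sub hxi
    have := (hasDerivAt_minsq (xu t i - x t i)).comp t hyi
    simpa [Function.comp_def, mul_assoc] using this
  have hφle : ∀ t : ℝ, 0 ≤ t →
      (∑ i, 2 * min (xu t i - x t i) 0 * D t i) ≤ K * φ t := by
    intro t ht
    calc ∑ i, 2 * min (xu t i - x t i) 0 * D t i
        ≤ ∑ i, 2 * (c i * φ t) := by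
          apply Finset.sum_le_sum
          intro i _
          have := key_bound P γ β hγ0 hβ hP0 hP1 d hd Qstar (xu t) (x t) i
          rw [hD]
          simp only
          nlinarith [this]
      _ = K * φ t := by
          rw [hK, mul_assoc, Finset.sum_mul, Finset.mul_sum]
  set ψ : ℝ → ℝ := fun t => φ t * Real.exp (-K * t) with hψ
  have hψderiv : ∀ t : ℝ, 0 ≤ t →
      HasDerivAt ψ ((∑ i, 2 * min (xu t i - x t i) 0 * D t i) * Real.exp (-K * t) +
        φ t * (Real.exp (-K * t) * (-K))) t := by
    intro t ht
    have he : HasDerivAt (fun τ : ℝ => Real.exp (-K * τ)) (Real.exp (-K * t) * (-K)) t := by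
      have h1 : HasDerivAt (fun τ : ℝ => -K * τ) (-K) t := by
        simpa using (hasDerivAt_id t).const_mul (-K)
      exact (Real.hasDerivAt_exp (-K * t)).comp t h1
    exact (hφderiv t ht).mul he
  have hψnonpos : ∀ t : ℝ, 0 ≤ t →
      (∑ i, 2 * min (xu t i - x t i) 0 * D t i) * Real.exp (-K * t) +
        φ t * (Real.exp (-K * t) * (-K)) ≤ 0 := by
    intro t ht
    have h1 := hφle t ht
    have h2 := Real.exp_pos (-K * t)
    nlinarith
  have hanti : AntitoneOn ψ (Set.Ici (0:ℝ)) := by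
    apply antitoneOn_of_deriv_nonpos (convex_Ici 0)
    · intro t ht
      exact (hψderiv t ht).continuousAt.continuousWithinAt
    · intro t ht
      rw [interior_Ici] at ht
      exact (hψderiv t (le_of_lt ht)).differentiableAt.differentiableWithinAt
    · intro t ht
      rw [interior_Ici] at ht
      rw [(hψderiv t ht.le).deriv]
      exact hψnonpos t ht.le
  intro t ht i
  have hψt : ψ t ≤ ψ 0 := hanti Set.self_mem_Ici (Set.mem_Ici.mpr ht) ht
  have hψ0 : ψ 0 = 0 := by rw [hψ]; simp [hφzero]
  have hψnonneg : 0 ≤ ψ t := mul_nonneg (hφ0 t) (Real.exp_pos _).le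
  have hφt : φ t = 0 := by
    have hep := Real.exp_pos (-K * t)
    have h2 : ψ t ≤ 0 := hψ0 ▸ hψt
    have h3 : φ t ≤ 0 := by
      by_contra h
      push_neg at h
      have : 0 < ψ t := mul_pos h hep
      linarith
    exact le_antisymm h3 (hφ0 t)
  have hterm : (min (xu t i - x t i) 0) ^ 2 = 0 := by
    have := (Finset.sum_eq_zero_iff_of_nonneg (fun j _ => sq_nonneg
      (min (xu t j - x t j) 0))).mp hφt i (Finset.mem_univ i)
    exact this
  have : min (xu t i - x t i) 0 = 0 := by
    have := pow_eq_zero_iff (n := 2) (by norm_num) |>.mp hterm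
    exact this
  rcases le_total (xu t i - x t i) 0 with h | h
  · rw [min_eq_left h] at this; linarith
  · linarith
end

section
/- Let x : [0,∞) → ℝ^{S×A} × ℝ^{S×A} be a differentiable curve with x'(t) = f(x(t)) for all t ≥ 0, and let x^l : [0,∞) → ℝ^{S×A} × ℝ^{S×A} be a differentiable curve with (x^l)'(t) = g(x^l(t)) for all t ≥ 0 and x^l(0) < x(0) componentwise (strict in every coordinate). Then x(t) ≥ x^l(t) componentwise for all t ≥ 0. -/
open Finset

open Filter Topology in
private lemma agt2_lower_le_field_aux {S A : Type*} [Fintype S] [Fintype A] [Nonempty A]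
    (P : S → A → S → ℝ) (γ β : ℝ) (hγ0 : 0 ≤ γ)
    (hP0 : ∀ s a s', 0 ≤ P s a s')
    (d : S → A → ℝ) (hd : ∀ s a, 0 ≤ d s a)
    (Qstar : S → A → ℝ) (πstar : S → A)
    (hπstar : ∀ s a, Qstar s a ≤ Qstar s (πstar s))
    (y : (S × A) ⊕ (S × A) → ℝ) (i : (S × A) ⊕ (S × A)) :
    agt2Lower P γ β d πstar y i ≤ agt2Field P γ β d Qstar y i := by
  cases i with
  | inr p => simp [agt2Lower, agt2Field]
  | inl p =>
    simp only [agt2Lower, agt2Field, Sum.elim_inl]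
    have key : ∀ s' : S, y (Sum.inr (s', πstar s')) ≤
        (univ.sup' univ_nonempty fun a' => y (Sum.inr (s', a')) + Qstar s' a') -
          univ.sup' univ_nonempty fun a' => Qstar s' a' := by
      intro s'
      have h1 : (univ.sup' univ_nonempty fun a' => Qstar s' a') = Qstar s' (πstar s') :=
        le_antisymm (Finset.sup'_le _ _ fun a _ => hπstar s' a)
          (Finset.le_sup' _ (Finset.mem_univ _))
      have h2 : y (Sum.inr (s', πstar s')) + Qstar s' (πstar s') ≤
          univ.sup' univ_nonempty fun a' => y (Sum.inr (s', a')) + Qstar s' a' :=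
        Finset.le_sup' (fun a' => y (Sum.inr (s', a')) + Qstar s' a')
          (Finset.mem_univ (πstar s'))
      rw [h1]; linarith
    have hsum : ∑ s', P p.1 p.2 s' * y (Sum.inr (s', πstar s')) ≤
        ∑ s', P p.1 p.2 s' *
          ((univ.sup' univ_nonempty fun a' => y (Sum.inr (s', a')) + Qstar s' a') -
            univ.sup' univ_nonempty fun a' => Qstar s' a') :=
      Finset.sum_le_sum fun s' _ => mul_le_mul_of_nonneg_left (key s') (hP0 _ _ _)
    have := mul_le_mul_of_nonneg_left hsum (mul_nonneg hγ0 (hd p.1 p.2))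
    linarith

theorem agt2_lower_comparison_solutions
    {S A : Type*} [Fintype S] [Fintype A] [Nonempty S] [Nonempty A]
    (P r : S → A → S → ℝ) (γ : ℝ) (hγ0 : 0 ≤ γ) (hγ1 : γ < 1)
    (hP0 : ∀ s a s', 0 ≤ P s a s') (hP1 : ∀ s a, ∑ s', P s a s' = 1)
    (Qstar : S → A → ℝ) (hQstar : bellmanT P r γ Qstar = Qstar)
    (β : ℝ) (hβ : 0 < β)
    (d : S → A → ℝ) (hd : ∀ s a, 0 < d s a)
    (πstar : S → A) (hπstar : ∀ s a, Qstar s a ≤ Qstar s (πstar s))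
    (x xl : ℝ → (S × A) ⊕ (S × A) → ℝ)
    (hx : ∀ t : ℝ, 0 ≤ t → HasDerivAt x (agt2Field P γ β d Qstar (x t)) t)
    (hxl : ∀ t : ℝ, 0 ≤ t → HasDerivAt xl (agt2Lower P γ β d πstar (xl t)) t)
    (h0 : ∀ i, xl 0 i < x 0 i) :
    ∀ t : ℝ, 0 ≤ t → ∀ i, xl t i ≤ x t i := by
  have hxc : ∀ t : ℝ, 0 ≤ t → ∀ i, HasDerivAt (fun u => x u i)
      (agt2Field P γ β d Qstar (x t) i) t :=
    fun t ht i => hasDerivAt_pi.1 (hx t ht) i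
  have hxlc : ∀ t : ℝ, 0 ≤ t → ∀ i, HasDerivAt (fun u => xl u i)
      (agt2Lower P γ β d πstar (xl t) i) t :=
    fun t ht i => hasDerivAt_pi.1 (hxl t ht) i
  suffices H : ∀ δ : ℝ, 0 < δ → ∀ t : ℝ, 0 ≤ t → ∀ i,
      0 < x t i - xl t i + δ * Real.exp t by
    intro t ht i
    by_contra hcon
    push_neg at hcon
    have hδ : 0 < (xl t i - x t i) / Real.exp t :=
      div_pos (by linarith) (Real.exp_pos t)
    have hH := H _ hδ t ht i
    rw [div_mul_cancel₀ _ (Real.exp_pos t).ne'] at hH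
    linarith
  intro δ hδ
  by_contra hcon
  push_neg at hcon
  obtain ⟨t0, ht0, i0, hi0⟩ := hcon
  set w : ℝ → (S × A) ⊕ (S × A) → ℝ :=
    fun t i => x t i - xl t i + δ * Real.exp t with hwdef
  have hwderiv : ∀ t : ℝ, 0 ≤ t → ∀ i, HasDerivAt (fun u => w u i)
      (agt2Field P γ β d Qstar (x t) i - agt2Lower P γ β d πstar (xl t) i
        + δ * Real.exp t) t := by
    intro t ht i
    exact ((hxc t ht i).sub (hxlc t ht i)).add ((Real.hasDerivAt_exp t).const_mul δ)
  have hwcont : ∀ t : ℝ, 0 ≤ t → ∀ i, ContinuousAt (fun u => w u i) t :=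
    fun t ht i => (hwderiv t ht i).continuousAt
  have hne : (univ : Finset ((S × A) ⊕ (S × A))).Nonempty := univ_nonempty
  set m : ℝ → ℝ := fun t => univ.inf' hne (fun i => w t i) with hmdef
  have hmcont : ∀ t : ℝ, 0 ≤ t → ContinuousAt m t := fun t ht =>
    ContinuousAt.finset_inf'_apply hne (fun i _ => hwcont t ht i)
  set E : Set ℝ := {t : ℝ | 0 ≤ t ∧ m t ≤ 0} with hEdef
  have hEne : E.Nonempty :=
    ⟨t0, ht0, le_trans (Finset.inf'_le _ (Finset.mem_univ i0)) hi0⟩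
  have hEbdd : BddBelow E := ⟨0, fun t ht => ht.1⟩
  set T := sInf E with hTdef
  have hT0 : 0 ≤ T := le_csInf hEne fun t ht => ht.1
  have hTcl : T ∈ closure E := csInf_mem_closure hEne hEbdd
  haveI hEnb : (nhdsWithin T E).NeBot := mem_closure_iff_nhdsWithin_neBot.1 hTcl
  have hmT : m T ≤ 0 :=
    le_of_tendsto ((hmcont T hT0).continuousWithinAt)
      (eventually_nhdsWithin_of_forall fun t (ht : t ∈ E) => ht.2)
  have hm0 : 0 < m 0 := by
    rw [Finset.lt_inf'_iff]
    intro i _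
    have h1 := h0 i
    simp only [hwdef, Real.exp_zero, mul_one]
    linarith
  have hTpos : 0 < T := by
    rcases hT0.lt_or_eq with h | h
    · exact h
    · exfalso; rw [← h] at hmT; linarith
  have hpre : ∀ t : ℝ, 0 ≤ t → t < T → ∀ i, 0 < w t i := by
    intro t ht htT i
    by_contra hcw
    push_neg at hcw
    have htE : t ∈ E := ⟨ht, le_trans (Finset.inf'_le _ (Finset.mem_univ i)) hcw⟩
    exact absurd (csInf_le hEbdd htE) (not_le.2 htT)
  have hIcosub : Set.Ico (0:ℝ) T ⊆ {T}ᶜ := fun t ht => ne_of_lt ht.2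
  have hIcocl : T ∈ closure (Set.Ico (0:ℝ) T) := by
    rw [closure_Ico hTpos.ne]
    exact ⟨hT0, le_refl T⟩
  haveI hIconb : (nhdsWithin T (Set.Ico (0:ℝ) T)).NeBot :=
    mem_closure_iff_nhdsWithin_neBot.1 hIcocl
  have hwT : ∀ j, 0 ≤ w T j := fun j =>
    ge_of_tendsto ((hwcont T hT0 j).continuousWithinAt)
      (eventually_nhdsWithin_of_forall fun t (ht : t ∈ Set.Ico (0:ℝ) T) =>
        (hpre t ht.1 ht.2 j).le)
  obtain ⟨j0, -, hj0⟩ := Finset.exists_mem_eq_inf' hne (fun i => w T i)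
  have hj00 : w T j0 = 0 := le_antisymm (hj0 ▸ hmT) (hwT j0)
  set D := agt2Field P γ β d Qstar (x T) j0 - agt2Lower P γ β d πstar (xl T) j0
      + δ * Real.exp T with hDdef
  have hDw : HasDerivAt (fun u => w u j0) D T := hwderiv T hT0 j0
  have hlow : agt2Lower P γ β d πstar (x T) j0 ≤ agt2Field P γ β d Qstar (x T) j0 :=
    agt2_lower_le_field_aux P γ β hγ0 hP0 d (fun s a => (hd s a).le) Qstar πstar hπstar _ _
  have hEpos : 0 < δ * Real.exp T := mul_pos hδ (Real.exp_pos T)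
  have hDpos : 0 < D := by
    have hgap : agt2Lower P γ β d πstar (x T) j0 - agt2Lower P γ β d πstar (xl T) j0
        + δ * Real.exp T ≤ D := by
      rw [hDdef]; linarith
    cases j0 with
    | inl p =>
      have hxxl : x T (Sum.inl p) - xl T (Sum.inl p) = -(δ * Real.exp T) := by
        have := hj00
        simp only [hwdef] at this
        linarith
      have hdiff : ∑ s', P p.1 p.2 s' * x T (Sum.inr (s', πstar s'))
          - ∑ s', P p.1 p.2 s' * xl T (Sum.inr (s', πstar s'))
          = ∑ s', P p.1 p.2 s' *
            (x T (Sum.inr (s', πstar s')) - xl T (Sum.inr (s', πstar s'))) := by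
        rw [← Finset.sum_sub_distrib]
        exact Finset.sum_congr rfl fun s' _ => (mul_sub _ _ _).symm
      have hsumlow : -(δ * Real.exp T) ≤ ∑ s', P p.1 p.2 s' *
          (x T (Sum.inr (s', πstar s')) - xl T (Sum.inr (s', πstar s'))) := by
        have hc : -(δ * Real.exp T)
            = ∑ s', P p.1 p.2 s' * (-(δ * Real.exp T)) := by
          rw [← Finset.sum_mul, hP1]; ring
        rw [hc]
        refine Finset.sum_le_sum fun s' _ => mul_le_mul_of_nonneg_left ?_ (hP0 _ _ _)
        have := hwT (Sum.inr (s', πstar s'))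
        simp only [hwdef] at this
        linarith
      have hmul : γ * d p.1 p.2 * (-(δ * Real.exp T)) ≤ γ * d p.1 p.2 *
          (∑ s', P p.1 p.2 s' *
            (x T (Sum.inr (s', πstar s')) - xl T (Sum.inr (s', πstar s')))) :=
        mul_le_mul_of_nonneg_left hsumlow (mul_nonneg hγ0 (hd _ _).le)
      have hlin : agt2Lower P γ β d πstar (x T) (Sum.inl p)
          - agt2Lower P γ β d πstar (xl T) (Sum.inl p)
          = -(d p.1 p.2) * (x T (Sum.inl p) - xl T (Sum.inl p))
            + γ * d p.1 p.2 * (∑ s', P p.1 p.2 s' *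
              (x T (Sum.inr (s', πstar s')) - xl T (Sum.inr (s', πstar s')))) := by
        simp only [agt2Lower, Sum.elim_inl]
        rw [← hdiff]; ring
      have hd1 : (0:ℝ) < d p.1 p.2 := hd _ _
      have haux : 0 ≤ d p.1 p.2 * (δ * Real.exp T) * (1 - γ) :=
        mul_nonneg (mul_nonneg hd1.le hEpos.le) (by linarith)
      calc (0:ℝ) < δ * Real.exp T + d p.1 p.2 * (δ * Real.exp T) * (1 - γ) := by linarith
        _ ≤ D := by
          refine le_trans ?_ hgap
          rw [hlin, hxxl]
          nlinarith [hmul]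
    | inr p =>
      have hxxl : x T (Sum.inr p) - xl T (Sum.inr p) = -(δ * Real.exp T) := by
        have := hj00
        simp only [hwdef] at this
        linarith
      have hge : -(δ * Real.exp T) ≤ x T (Sum.inl p) - xl T (Sum.inl p) := by
        have := hwT (Sum.inl p)
        simp only [hwdef] at this
        linarith
      have hlin : agt2Lower P γ β d πstar (x T) (Sum.inr p)
          - agt2Lower P γ β d πstar (xl T) (Sum.inr p)
          = β * d p.1 p.2 * ((x T (Sum.inl p) - xl T (Sum.inl p))
            - (x T (Sum.inr p) - xl T (Sum.inr p))) := by
        simp only [agt2Lower, Sum.elim_inr]; ring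
      have hnn : 0 ≤ β * d p.1 p.2 * ((x T (Sum.inl p) - xl T (Sum.inl p))
          - (x T (Sum.inr p) - xl T (Sum.inr p))) := by
        apply mul_nonneg (mul_nonneg hβ.le (hd _ _).le)
        rw [hxxl]; linarith
      calc (0:ℝ) < δ * Real.exp T := hEpos
        _ ≤ D := by rw [← hlin] at hnn; linarith
  -- slope contradiction
  have hslope : Filter.Tendsto (slope (fun u => w u j0) T)
      (nhdsWithin T {T}ᶜ) (nhds D) := hasDerivAt_iff_tendsto_slope.1 hDw
  have hDle : D ≤ 0 := by
    refine le_of_tendsto (hslope.mono_left (nhdsWithin_mono T hIcosub))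
      (eventually_nhdsWithin_of_forall fun t (ht : t ∈ Set.Ico (0:ℝ) T) => ?_)
    rw [slope_def_field, hj00, sub_zero]
    exact div_nonpos_of_nonneg_of_nonpos (hpre t ht.1 ht.2 j0).le (by linarith [ht.2])
  linarith
end

section
/- For any β > 0, the AGT2 lower comparison system (a linear ODE) is globally attractive at the origin: every differentiable curve x : [0,∞) → ℝ^{S×A} × ℝ^{S×A} satisfying x'(t) = g(x(t)) for all t ≥ 0 converges to 0 (componentwise) as t → ∞. -/
open Finset

open Filter

section Helpers
open Finset

private lemma continuousAt_finset_sup' {ι : Type*} (s : Finset ι) (hs : s.Nonempty)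
    (f : ι → ℝ → ℝ) (t : ℝ) (h : ∀ i ∈ s, ContinuousAt (f i) t) :
    ContinuousAt (fun u => s.sup' hs (fun i => f i u)) t := by
  induction hs using Finset.Nonempty.cons_induction with
  | singleton c =>
    have := h c (Finset.mem_singleton_self c)
    exact this
  | cons c s hcs hne ih =>
    have heq : (fun u => (Finset.cons c s hcs).sup' (Finset.cons_nonempty hcs) fun i => f i u)
        = fun u => max (f c u) (s.sup' hne fun i => f i u) :=
      funext fun u => Finset.sup'_cons hne (fun i => f i u)
    rw [heq]
    exact (h c (Finset.mem_cons_self c s)).max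
      (ih fun i hi => h i (Finset.mem_cons.2 (Or.inr hi)))

private lemma agt2Lower_smul {S A : Type*} [Fintype S]
    (P : S → A → S → ℝ) (γ β : ℝ) (d : S → A → ℝ) (πstar : S → A)
    (e : ℝ) (z : (S × A) ⊕ (S × A) → ℝ) (i : (S × A) ⊕ (S × A)) :
    agt2Lower P γ β d πstar (fun j => e * z j) i = e * agt2Lower P γ β d πstar z i := by
  cases i with
  | inl p =>
    simp only [agt2Lower, Sum.elim_inl]
    rw [show (∑ s', P p.1 p.2 s' * (e * z (Sum.inr (s', πstar s'))))
        = e * ∑ s', P p.1 p.2 s' * z (Sum.inr (s', πstar s')) by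
      rw [Finset.mul_sum]; exact Finset.sum_congr rfl fun _ _ => by ring]
    ring
  | inr p =>
    simp only [agt2Lower, Sum.elim_inr]
    ring

private lemma agt2Lower_dissip {S A : Type*} [Fintype S] [Fintype A]
    (P : S → A → S → ℝ) (γ β : ℝ) (d : S → A → ℝ) (πstar : S → A)
    (hγ0 : 0 ≤ γ) (hβ : 0 < β) (hd : ∀ s a, 0 < d s a)
    (hP0 : ∀ s a s', 0 ≤ P s a s') (hP1 : ∀ s a, ∑ s', P s a s' = 1)
    (c lam K : ℝ) (hc1 : 1 < c) (hK : 0 < K)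
    (hlam1 : ∀ s a, lam < d s a * (1 - γ * c))
    (hlam2 : ∀ s a, lam * c < β * d s a * (c - 1))
    (z : (S × A) ⊕ (S × A) → ℝ) (σ : ℝ) (hσ : σ = 1 ∨ σ = -1)
    (i : (S × A) ⊕ (S × A))
    (hzi : σ * z i = Sum.elim (fun _ => (1:ℝ)) (fun _ => c) i * K)
    (hz : ∀ j, |z j| ≤ Sum.elim (fun _ => (1:ℝ)) (fun _ => c) j * K) :
    σ * (agt2Lower P γ β d πstar z i + lam * z i) < 0 := by
  have hσw : ∀ w : ℝ, σ * w ≤ |w| := by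
    intro w; rcases hσ with h | h <;> subst h
    · simpa using le_abs_self w
    · simpa using neg_le_abs w
  cases i with
  | inl p =>
    simp only [Sum.elim_inl, one_mul] at hzi
    have hγd : 0 ≤ γ * d p.1 p.2 := mul_nonneg hγ0 (hd p.1 p.2).le
    have hswap : σ * (∑ s', P p.1 p.2 s' * z (Sum.inr (s', πstar s')))
        = ∑ s', P p.1 p.2 s' * (σ * z (Sum.inr (s', πstar s'))) := by
      rw [Finset.mul_sum]; exact Finset.sum_congr rfl fun _ _ => by ring
    have hsum : ∑ s', P p.1 p.2 s' * (σ * z (Sum.inr (s', πstar s'))) ≤ c * K := by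
      calc ∑ s', P p.1 p.2 s' * (σ * z (Sum.inr (s', πstar s')))
          ≤ ∑ s', P p.1 p.2 s' * (c * K) := by
            refine Finset.sum_le_sum fun s' _ => ?_
            exact mul_le_mul_of_nonneg_left
              ((hσw _).trans (by simpa using hz (Sum.inr (s', πstar s')))) (hP0 _ _ _)
        _ = c * K := by rw [← Finset.sum_mul, hP1, one_mul]
    have e1 : σ * (agt2Lower P γ β d πstar z (Sum.inl p) + lam * z (Sum.inl p))
        = (lam - d p.1 p.2) * (σ * z (Sum.inl p)) +
          (γ * d p.1 p.2) * (σ * ∑ s', P p.1 p.2 s' * z (Sum.inr (s', πstar s'))) := by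
      simp only [agt2Lower, Sum.elim_inl]; ring
    rw [e1, hzi, hswap]
    have h1 := hlam1 p.1 p.2
    nlinarith [mul_le_mul_of_nonneg_left hsum hγd, mul_lt_mul_of_pos_right h1 hK]
  | inr p =>
    simp only [Sum.elim_inr] at hzi
    have hβd : 0 < β * d p.1 p.2 := mul_pos hβ (hd p.1 p.2)
    have e1 : σ * (agt2Lower P γ β d πstar z (Sum.inr p) + lam * z (Sum.inr p))
        = (β * d p.1 p.2) * (σ * z (Sum.inl p)) +
          (lam - β * d p.1 p.2) * (σ * z (Sum.inr p)) := by
      simp only [agt2Lower, Sum.elim_inr]; ring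
    rw [e1, hzi]
    have h2 := hlam2 p.1 p.2
    have h3 : σ * z (Sum.inl p) ≤ K := (hσw _).trans (by simpa using hz (Sum.inl p))
    nlinarith [mul_le_mul_of_nonneg_left h3 hβd.le]

end Helpers

theorem agt2_lower_system_globally_attractive
    {S A : Type*} [Fintype S] [Fintype A] [Nonempty S] [Nonempty A]
    (P r : S → A → S → ℝ) (γ : ℝ) (hγ0 : 0 ≤ γ) (hγ1 : γ < 1)
    (hP0 : ∀ s a s', 0 ≤ P s a s') (hP1 : ∀ s a, ∑ s', P s a s' = 1)
    (Qstar : S → A → ℝ) (hQstar : bellmanT P r γ Qstar = Qstar)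
    (β : ℝ) (hβ : 0 < β)
    (d : S → A → ℝ) (hd : ∀ s a, 0 < d s a)
    (πstar : S → A) (hπstar : ∀ s a, Qstar s a ≤ Qstar s (πstar s))
    (x : ℝ → (S × A) ⊕ (S × A) → ℝ)
    (hx : ∀ t : ℝ, 0 ≤ t → HasDerivAt x (agt2Lower P γ β d πstar (x t)) t) :
    ∀ i, Tendsto (fun t => x t i) atTop (nhds 0) := by
  haveI : Nonempty ((S × A) ⊕ (S × A)) :=
    ⟨Sum.inl ⟨Classical.arbitrary S, Classical.arbitrary A⟩⟩
  -- constants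
  set c : ℝ := 2 / (1 + γ) with hcdef
  have h1γ : (0:ℝ) < 1 + γ := by linarith
  have hc1 : 1 < c := by
    rw [hcdef, lt_div_iff₀ h1γ]; linarith
  have hc0 : (0:ℝ) < c := lt_trans one_pos hc1
  have hcγ : γ * c < 1 := by
    have h : γ * c = 2 * γ / (1 + γ) := by rw [hcdef]; ring
    rw [h, div_lt_one h1γ]; linarith
  set D : ℝ := (Finset.univ : Finset (S × A)).inf' Finset.univ_nonempty
      (fun p => d p.1 p.2) with hDdef
  have hD : 0 < D := by
    rw [hDdef, Finset.lt_inf'_iff]; exact fun p _ => hd p.1 p.2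
  have hDle : ∀ s a, D ≤ d s a := fun s a =>
    Finset.inf'_le _ (Finset.mem_univ (s, a))
  set lam : ℝ := min (D * (1 - γ * c)) (β * D * ((c - 1) / c)) / 2 with hlamdef
  have h1γc : 0 < 1 - γ * c := by linarith
  have hm1 : 0 < D * (1 - γ * c) := mul_pos hD h1γc
  have hm2 : 0 < β * D * ((c - 1) / c) :=
    mul_pos (mul_pos hβ hD) (div_pos (by linarith) hc0)
  have hlam0 : 0 < lam := by
    rw [hlamdef]; exact half_pos (lt_min hm1 hm2)
  have hlam1 : ∀ s a, lam < d s a * (1 - γ * c) := by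
    intro s a
    calc lam ≤ D * (1 - γ * c) / 2 := by
          rw [hlamdef]; linarith [min_le_left (D * (1 - γ * c)) (β * D * ((c - 1) / c))]
      _ < D * (1 - γ * c) := half_lt_self hm1
      _ ≤ d s a * (1 - γ * c) := mul_le_mul_of_nonneg_right (hDle s a) h1γc.le
  have hlam2 : ∀ s a, lam * c < β * d s a * (c - 1) := by
    intro s a
    have ha : lam < β * D * ((c - 1) / c) := by
      calc lam ≤ β * D * ((c - 1) / c) / 2 := by
            rw [hlamdef]; linarith [min_le_right (D * (1 - γ * c)) (β * D * ((c - 1) / c))]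
        _ < β * D * ((c - 1) / c) := half_lt_self hm2
    have hb := mul_lt_mul_of_pos_right ha hc0
    have he : β * D * ((c - 1) / c) * c = β * D * (c - 1) := by
      field_simp
    rw [he] at hb
    calc lam * c < β * D * (c - 1) := hb
      _ ≤ β * d s a * (c - 1) := by
          have h1 : β * D ≤ β * d s a := mul_le_mul_of_nonneg_left (hDle s a) hβ.le
          exact mul_le_mul_of_nonneg_right h1 (by linarith)
  -- the rescaled trajectory
  set v : (S × A) ⊕ (S × A) → ℝ := Sum.elim (fun _ => (1:ℝ)) (fun _ => c) with hvdef
  have hv0 : ∀ j, 0 < v j := by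
    intro j; cases j <;> simp [hvdef] <;> exact hc0
  set y : ℝ → (S × A) ⊕ (S × A) → ℝ := fun t j => Real.exp (lam * t) * x t j with hydef
  have hyderiv : ∀ t, 0 ≤ t → ∀ j, HasDerivAt (fun u => y u j)
      (agt2Lower P γ β d πstar (y t) j + lam * y t j) t := by
    intro t ht j
    have hx' := hasDerivAt_pi.1 (hx t ht) j
    have hexp : HasDerivAt (fun u : ℝ => Real.exp (lam * u))
        (Real.exp (lam * t) * lam) t := by
      simpa using ((hasDerivAt_id t).const_mul lam).exp
    have hmul := hexp.mul hx'
    have hyt : y t = fun j => Real.exp (lam * t) * x t j := rfl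
    have hlin : agt2Lower P γ β d πstar (y t) j
        = Real.exp (lam * t) * agt2Lower P γ β d πstar (x t) j := by
      rw [hyt]; exact agt2Lower_smul P γ β d πstar _ (x t) j
    have : HasDerivAt (fun u => y u j)
        (Real.exp (lam * t) * lam * x t j
          + Real.exp (lam * t) * agt2Lower P γ β d πstar (x t) j) t := hmul
    convert this using 1
    rw [hlin, hydef]; ring
  have hycont : ∀ t, 0 ≤ t → ∀ j, ContinuousAt (fun u => y u j) t :=
    fun t ht j => (hyderiv t ht j).continuousAt
  set F : ℝ → ℝ := fun t =>
    Finset.univ.sup' Finset.univ_nonempty (fun j => |y t j| / v j) with hFdef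
  set K : ℝ := F 0 + 1 with hKdef
  have hF0K : F 0 < K := by rw [hKdef]; linarith
  have hK0 : 0 < K := by
    have h1 : (0:ℝ) ≤ |y 0 (Classical.arbitrary _)| / v (Classical.arbitrary _) :=
      div_nonneg (abs_nonneg _) (hv0 _).le
    have h2 := Finset.le_sup' (f := fun j => |y 0 j| / v j)
      (Finset.mem_univ (Classical.arbitrary ((S × A) ⊕ (S × A))))
    rw [hKdef]
    have : (0:ℝ) ≤ F 0 := le_trans h1 h2
    linarith
  have hFcont : ∀ t, 0 ≤ t → ContinuousAt F t := by
    intro t ht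
    exact continuousAt_finset_sup' _ _ _ t
      (fun j _ => ((hycont t ht j).abs).div_const _)
  -- invariance of the ball of radius K
  have hbound : ∀ t, 0 ≤ t → ∀ j, |y t j| ≤ v j * K := by
    by_contra hcon
    push_neg at hcon
    obtain ⟨t₁, ht₁, j₁, hj₁⟩ := hcon
    set T : Set ℝ := {t | 0 ≤ t ∧ K ≤ F t} with hTdef
    have hT1 : t₁ ∈ T := by
      refine ⟨ht₁, ?_⟩
      have h1 : K < |y t₁ j₁| / v j₁ := by
        rw [lt_div_iff₀ (hv0 j₁)]; linarith [hj₁]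
      exact le_of_lt (lt_of_lt_of_le h1
        (Finset.le_sup' (f := fun j => |y t₁ j| / v j) (Finset.mem_univ j₁)))
    have hTne : T.Nonempty := ⟨t₁, hT1⟩
    have hTbdd : BddBelow T := ⟨0, fun t ht => ht.1⟩
    set t₀ : ℝ := sInf T with ht₀def
    have ht₀cl : t₀ ∈ closure T := csInf_mem_closure hTne hTbdd
    have ht₀0 : 0 ≤ t₀ := by
      have hsub : closure T ⊆ closure (Set.Ici (0:ℝ)) :=
        closure_mono (fun t ht => ht.1)
      have := hsub ht₀cl
      rwa [closure_Ici] at this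
    haveI hnb : (nhdsWithin t₀ T).NeBot := mem_closure_iff_nhdsWithin_neBot.1 ht₀cl
    have hFge : K ≤ F t₀ := by
      refine ge_of_tendsto ((hFcont t₀ ht₀0).continuousWithinAt (s := T)) ?_
      filter_upwards [self_mem_nhdsWithin] with t ht
      exact ht.2
    have ht₀pos : 0 < t₀ := by
      rcases lt_or_eq_of_le ht₀0 with h | h
      · exact h
      · exfalso; rw [← h] at hFge; linarith
    have hFle : F t₀ ≤ K := by
      by_contra hgt
      push_neg at hgt
      have hev : ∀ᶠ t in nhds t₀, K < F t :=
        (hFcont t₀ ht₀0).eventually_const_lt hgt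
      have hev' : ∀ᶠ t in nhdsWithin t₀ (Set.Iio t₀), K < F t :=
        hev.filter_mono nhdsWithin_le_nhds
      have hmem : Set.Ioo 0 t₀ ∈ nhdsWithin t₀ (Set.Iio t₀) :=
        Ioo_mem_nhdsLT_of_mem ⟨ht₀pos, le_refl t₀⟩
      obtain ⟨t, htK, htI⟩ := (hev'.and (eventually_of_mem hmem fun t ht => ht)).exists
      have htT : t ∈ T := ⟨htI.1.le, htK.le⟩
      exact absurd (csInf_le hTbdd htT) (not_le.2 htI.2)
    have hFt₀ : F t₀ = K := le_antisymm hFle hFge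
    obtain ⟨i, _, hieq⟩ :=
      Finset.exists_mem_eq_sup' (Finset.univ_nonempty) (fun j => |y t₀ j| / v j)
    have hiK : |y t₀ i| / v i = K := by rw [← hieq]; exact hFt₀.symm ▸ rfl
    have hiabs : |y t₀ i| = v i * K := by
      have h' := (div_eq_iff (ne_of_gt (hv0 i))).1 hiK
      rw [h']; ring
    have hall : ∀ j, |y t₀ j| ≤ v j * K := by
      intro j
      have h1 : |y t₀ j| / v j ≤ F t₀ :=
        Finset.le_sup' (f := fun j => |y t₀ j| / v j) (Finset.mem_univ j)
      rw [hFt₀] at h1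
      rw [div_le_iff₀ (hv0 j)] at h1
      linarith [h1]
    set σ : ℝ := if 0 ≤ y t₀ i then 1 else -1 with hσdef
    have hσ : σ = 1 ∨ σ = -1 := by
      by_cases h : 0 ≤ y t₀ i <;> simp [hσdef, h]
    have hσy : σ * y t₀ i = |y t₀ i| := by
      by_cases h : 0 ≤ y t₀ i
      · rw [hσdef]; simp [h, abs_of_nonneg h]
      · rw [hσdef]; simp [h, abs_of_neg (not_le.1 h)]
    have hσzi : σ * y t₀ i = v i * K := hσy.trans hiabs
    have hderiv : HasDerivAt (fun t => σ * y t i)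
        (σ * (agt2Lower P γ β d πstar (y t₀) i + lam * y t₀ i)) t₀ :=
      (hyderiv t₀ ht₀pos.le i).const_mul σ
    have hvelim : v = Sum.elim (fun _ => (1:ℝ)) (fun _ => c) := hvdef
    have hneg : σ * (agt2Lower P γ β d πstar (y t₀) i + lam * y t₀ i) < 0 := by
      refine agt2Lower_dissip P γ β d πstar hγ0 hβ hd hP0 hP1 c lam K hc1 hK0
        hlam1 hlam2 (y t₀) σ hσ i ?_ ?_
      · rw [← hvelim]; exact hσzi
      · intro j; rw [← hvelim]; exact hall j
    have hslope := hasDerivAt_iff_tendsto_slope.1 hderiv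
    have hev : ∀ᶠ t in nhdsWithin t₀ {t₀}ᶜ,
        slope (fun t => σ * y t i) t₀ t < 0 := hslope (Iio_mem_nhds hneg)
    have hev2 : ∀ᶠ t in nhdsWithin t₀ (Set.Iio t₀),
        slope (fun t => σ * y t i) t₀ t < 0 :=
      hev.filter_mono (nhdsWithin_mono t₀ (fun t (ht : t < t₀) => ne_of_lt ht))
    have hmem : Set.Ioo 0 t₀ ∈ nhdsWithin t₀ (Set.Iio t₀) :=
      Ioo_mem_nhdsLT_of_mem ⟨ht₀pos, le_refl t₀⟩
    obtain ⟨t, hts, htI⟩ := (hev2.and (eventually_of_mem hmem fun t ht => ht)).exists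
    have htlt : t < t₀ := htI.2
    have hgt : σ * y t₀ i < σ * y t i := by
      have hne : t - t₀ < 0 := sub_neg.2 htlt
      have hpos := mul_pos_of_neg_of_neg hts hne
      have heq : slope (fun t => σ * y t i) t₀ t * (t - t₀)
          = σ * y t i - σ * y t₀ i := by
        rw [slope_def_field]
        exact div_mul_cancel₀ _ (sub_ne_zero.2 (ne_of_lt htlt))
      rw [heq] at hpos
      linarith
    have hKlt : K < |y t i| / v i := by
      have h2 : σ * y t i ≤ |y t i| := by
        rcases hσ with h | h <;> rw [h]
        · simpa using le_abs_self (y t i)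
        · simpa using neg_le_abs (y t i)
      rw [lt_div_iff₀ (hv0 i)]
      calc K * v i = v i * K := mul_comm _ _
        _ = σ * y t₀ i := hσzi.symm
        _ < σ * y t i := hgt
        _ ≤ |y t i| := h2
    have htT : t ∈ T := by
      refine ⟨htI.1.le, ?_⟩
      exact le_of_lt (lt_of_lt_of_le hKlt
        (Finset.le_sup' (f := fun j => |y t j| / v j) (Finset.mem_univ i)))
    exact absurd (csInf_le hTbdd htT) (not_le.2 htlt)
  -- conclusion
  intro i0
  have hxb : ∀ t, 0 ≤ t → |x t i0| ≤ v i0 * K * Real.exp (-(lam * t)) := by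
    intro t ht
    have h1 := hbound t ht i0
    have h2 : |y t i0| = Real.exp (lam * t) * |x t i0| := by
      rw [hydef]; simp [abs_mul, abs_of_pos (Real.exp_pos _)]
    rw [h2] at h1
    rw [Real.exp_neg, ← div_eq_mul_inv, le_div_iff₀ (Real.exp_pos _)]
    linarith [h1, mul_comm (|x t i0|) (Real.exp (lam * t))]
  have hlim : Tendsto (fun t => v i0 * K * Real.exp (-(lam * t))) atTop (nhds 0) := by
    have h1 : Tendsto (fun t : ℝ => lam * t) atTop atTop :=
      Tendsto.const_mul_atTop hlam0 tendsto_id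
    have h2 : Tendsto (fun t : ℝ => Real.exp (-(lam * t))) atTop (nhds 0) :=
      Real.tendsto_exp_neg_atTop_nhds_zero.comp h1
    have := h2.const_mul (v i0 * K)
    simpa using this
  have hlim' : Tendsto (fun t => -(v i0 * K * Real.exp (-(lam * t)))) atTop (nhds 0) := by
    have := hlim.neg; simpa using this
  refine tendsto_of_tendsto_of_tendsto_of_le_of_le' hlim' hlim ?_ ?_
  · filter_upwards [eventually_ge_atTop (0:ℝ)] with t ht
    have := hxb t ht
    have habs := abs_le.1 this
    linarith [habs.1]
  · filter_upwards [eventually_ge_atTop (0:ℝ)] with t ht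
    exact (abs_le.1 (hxb t ht)).2
end

section
/- The SGT2 ODE vector field f is quasi-monotone increasing on ℝ^{S×A} × ℝ^{S×A} (viewed as ℝ^{2|S||A|}). -/
open Finset

/-- Sup norm on `ℝ^{S×A}`. -/
noncomputable def supNorm {S A : Type*} [Fintype S] [Fintype A] [Nonempty S] [Nonempty A]
    (Q : S → A → ℝ) : ℝ :=
  univ.sup' univ_nonempty (fun p : S × A => |Q p.1 p.2|)

/-- The SGT2 ODE vector field on `ℝ^{S×A} × ℝ^{S×A}`, indexed by `(S × A) ⊕ (S × A)`
(the first summand carries `x₁`, the second carries `x₂`). -/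
noncomputable def sgt2Field {S A : Type*} [Fintype S] [Fintype A] [Nonempty A]
    (P : S → A → S → ℝ) (γ β : ℝ) (d : S → A → ℝ) (Qstar : S → A → ℝ)
    (x : (S × A) ⊕ (S × A) → ℝ) : (S × A) ⊕ (S × A) → ℝ :=
  Sum.elim
    (fun p => -((1 + β) * d p.1 p.2) * x (Sum.inl p) + β * d p.1 p.2 * x (Sum.inr p) +
      γ * d p.1 p.2 * ∑ s', P p.1 p.2 s' *
        ((univ.sup' univ_nonempty fun a' => x (Sum.inr (s', a')) + Qstar s' a') -
          univ.sup' univ_nonempty fun a' => Qstar s' a'))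
    (fun p => -((1 + β) * d p.1 p.2) * x (Sum.inr p) + β * d p.1 p.2 * x (Sum.inl p) +
      γ * d p.1 p.2 * ∑ s', P p.1 p.2 s' *
        ((univ.sup' univ_nonempty fun a' => x (Sum.inl (s', a')) + Qstar s' a') -
          univ.sup' univ_nonempty fun a' => Qstar s' a'))

theorem sgt2Field_quasiMonotone
    {S A : Type*} [Fintype S] [Fintype A] [Nonempty S] [Nonempty A]
    (P r : S → A → S → ℝ) (γ : ℝ) (hγ0 : 0 ≤ γ) (hγ1 : γ < 1)
    (hP0 : ∀ s a s', 0 ≤ P s a s') (hP1 : ∀ s a, ∑ s', P s a s' = 1)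
    (Qstar : S → A → ℝ) (hQstar : bellmanT P r γ Qstar = Qstar)
    (β : ℝ) (hβ : 0 < β)
    (d : S → A → ℝ) (hd : ∀ s a, 0 < d s a) :
    QuasiMonotone (sgt2Field P γ β d Qstar) := by
  intro i x y hxy hle
  cases i with
  | inl p =>
      simp only [sgt2Field, Sum.elim_inl]
      rw [hxy]
      refine add_le_add (add_le_add le_rfl ?_) ?_
      · exact mul_le_mul_of_nonneg_left (hle _ (by simp)) (mul_nonneg hβ.le (hd _ _).le)
      · refine mul_le_mul_of_nonneg_left ?_ (mul_nonneg hγ0 (hd _ _).le)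
        refine Finset.sum_le_sum fun s' _ => ?_
        refine mul_le_mul_of_nonneg_left (sub_le_sub_right ?_ _) (hP0 _ _ _)
        exact Finset.sup'_mono_fun fun a' _ =>
          add_le_add_left (hle (Sum.inr (s', a')) (by simp)) _
  | inr p =>
      simp only [sgt2Field, Sum.elim_inr]
      rw [hxy]
      refine add_le_add (add_le_add le_rfl ?_) ?_
      · exact mul_le_mul_of_nonneg_left (hle _ (by simp)) (mul_nonneg hβ.le (hd _ _).le)
      · refine mul_le_mul_of_nonneg_left ?_ (mul_nonneg hγ0 (hd _ _).le)
        refine Finset.sum_le_sum fun s' _ => ?_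
        refine mul_le_mul_of_nonneg_left (sub_le_sub_right ?_ _) (hP0 _ _ _)
        exact Finset.sup'_mono_fun fun a' _ =>
          add_le_add_left (hle (Sum.inl (s', a')) (by simp)) _
end
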